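/- For the square grid graph P_n □ P_n with n ≥ 2, F(P_n □ P_n) = n² − n. -/

import Mathlib

namespace ZeroForcing

/-- One step of the zero forcing process: all vertices forced from blue set `S`
(a blue vertex with exactly one white neighbor forces that neighbor). -/
def step {V : Type*} (G : SimpleGraph V) (S : Set V) : Set V :=
  S ∪ {v | ∃ u ∈ S, G.Adj u v ∧ ∀ w, G.Adj u w → w ∉ S → w = v}

/-- `S` is a zero forcing set: iterating the color-change rule makes everything blue. -/
def IsZeroForcingSet {V : Type*} (G : SimpleGraph V) (S : Set V) : Prop :=
  ∃ k, (step G)^[k] S = Set.univ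

/-- `S` is a failed zero forcing set. -/
def IsFailedSet {V : Type*} (G : SimpleGraph V) (S : Set V) : Prop :=
  ¬ IsZeroForcingSet G S

/-- The zero forcing number `Z(G)`. -/
noncomputable def Z {V : Type*} (G : SimpleGraph V) : ℕ :=
  sInf {k | ∃ S : Set V, S.ncard = k ∧ IsZeroForcingSet G S}

/-- The failed zero forcing number `F(G)`. -/
noncomputable def F {V : Type*} (G : SimpleGraph V) : ℕ :=
  sSup {k | ∃ S : Set V, S.ncard = k ∧ IsFailedSet G S}

/-- The strong product of two simple graphs. -/
def strongProd {α β : Type*} (G : SimpleGraph α) (H : SimpleGraph β) :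
    SimpleGraph (α × β) where
  Adj x y := x ≠ y ∧ (x.1 = y.1 ∨ G.Adj x.1 y.1) ∧ (x.2 = y.2 ∨ H.Adj x.2 y.2)
  symm := ⟨by
    rintro x y ⟨h1, h2, h3⟩
    exact ⟨h1.symm, h2.imp Eq.symm (fun h => G.adj_symm h), h3.imp Eq.symm (fun h => H.adj_symm h)⟩⟩
  loopless := ⟨fun x h => h.1 rfl⟩

/-- The lexicographic product of two simple graphs. -/
def lexProd {α β : Type*} (G : SimpleGraph α) (H : SimpleGraph β) :
    SimpleGraph (α × β) where
  Adj x y := G.Adj x.1 y.1 ∨ (x.1 = y.1 ∧ H.Adj x.2 y.2)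
  symm := ⟨by
    rintro x y (h | ⟨h1, h2⟩)
    · exact Or.inl h.symm
    · exact Or.inr ⟨h1.symm, h2.symm⟩⟩
  loopless := ⟨by
    rintro x (h | ⟨h1, h2⟩)
    · exact G.loopless.irrefl _ h
    · exact H.loopless.irrefl _ h2⟩

/-- The corona `G ∘ H`: one copy of `G` and, for each vertex `a` of `G`, a copy of `H`
all of whose vertices are joined to `a`. -/
def corona {α β : Type*} (G : SimpleGraph α) (H : SimpleGraph β) :
    SimpleGraph (α ⊕ α × β) where
  Adj x y :=
    match x, y with
    | .inl a, .inl a' => G.Adj a a'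
    | .inl a, .inr p => a = p.1
    | .inr p, .inl a' => p.1 = a'
    | .inr p, .inr q => p.1 = q.1 ∧ H.Adj p.2 q.2
  symm := ⟨by
    rintro (a | p) (a' | q) h
    · exact G.adj_symm h
    · exact h.symm
    · exact h.symm
    · exact ⟨h.1.symm, H.adj_symm h.2⟩⟩
  loopless := ⟨by
    rintro (a | p) h
    · exact G.loopless.irrefl _ h
    · exact H.loopless.irrefl _ h.2⟩

end ZeroForcing



namespace GridFort

abbrev grid (n : ℕ) : SimpleGraph (Fin n × Fin n) :=
  (SimpleGraph.pathGraph n).boxProd (SimpleGraph.pathGraph n)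

variable {n : ℕ}

def Fort (G : SimpleGraph (Fin n × Fin n)) (W : Set (Fin n × Fin n)) : Prop :=
  ∀ v ∈ W, ∀ u, u ∉ W → G.Adj u v → ∃ w ∈ W, G.Adj u w ∧ w ≠ v

lemma grid_adj {u w : Fin n × Fin n} :
    (grid n).Adj u w ↔
      (u.1 = w.1 ∧ (u.2.val + 1 = w.2.val ∨ w.2.val + 1 = u.2.val)) ∨
      (u.2 = w.2 ∧ (u.1.val + 1 = w.1.val ∨ w.1.val + 1 = u.1.val)) := by
  rw [SimpleGraph.boxProd_adj]
  simp only [SimpleGraph.pathGraph_adj]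
  tauto

section Slab

variable {W : Set (Fin n × Fin n)} {lo hi : ℕ}

def slab (W : Set (Fin n × Fin n)) (lo hi : ℕ) : Set (Fin n × Fin n) :=
  {p ∈ W | lo ≤ p.1.val ∧ p.1.val ≤ hi}

def SlabHyp (W : Set (Fin n × Fin n)) (lo hi : ℕ) : Prop :=
  ∀ p ∈ W, lo ≤ p.1.val + 1 → p.1.val ≤ hi + 1 → (lo ≤ p.1.val ∧ p.1.val ≤ hi)

lemma mem_slab_of_adj (hs : SlabHyp W lo hi) {r c : Fin n} {w : Fin n × Fin n}
    (hu1 : lo ≤ r.val) (hu2 : r.val ≤ hi) (hw : w ∈ W)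
    (hadj : (grid n).Adj (r, c) w) : w ∈ slab W lo hi := by
  rcases grid_adj.mp hadj with ⟨h1, _⟩ | ⟨_, h2 | h2⟩
  · have h1' : r.val = w.1.val := by rw [show r = w.1 from h1]
    exact ⟨hw, hs w hw (by omega) (by omega)⟩
  · have h2' : r.val + 1 = w.1.val := h2
    exact ⟨hw, hs w hw (by omega) (by omega)⟩
  · have h2' : w.1.val + 1 = r.val := h2
    exact ⟨hw, hs w hw (by omega) (by omega)⟩

lemma fort_elim (hW : Fort (grid n) W) {v u : Fin n × Fin n} (hv : v ∈ W) (hu : u ∉ W)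
    (hadj : (grid n).Adj u v) (hall : ∀ w ∈ W, (grid n).Adj u w → w = v) : False := by
  obtain ⟨w, hw, hadj', hne⟩ := hW v hv u hu hadj
  exact hne (hall w hw hadj')

lemma col_min (hW : Fort (grid n) W) (hs : SlabHyp W lo hi)
    (hne : (slab W lo hi).Nonempty) :
    ∃ p ∈ slab W lo hi, p.2.val = 0 := by
  obtain ⟨v, hv, hmin⟩ := Set.exists_min_image (slab W lo hi) (fun p => p.2.val)
    (Set.toFinite _) hne
  refine ⟨v, hv, ?_⟩
  by_contra h0
  have hcn : v.2.val < n := v.2.isLt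
  have hc0 : 0 < v.2.val := Nat.pos_of_ne_zero h0
  have hu : (v.1, (⟨v.2.val - 1, by omega⟩ : Fin n)) ∉ W := by
    intro huW
    have h := hmin _ ⟨huW, hv.2⟩
    have h' : v.2.val ≤ v.2.val - 1 := h
    omega
  have hadj : (grid n).Adj (v.1, (⟨v.2.val - 1, by omega⟩ : Fin n)) v := by
    rw [grid_adj]
    exact Or.inl ⟨rfl, Or.inl (by show v.2.val - 1 + 1 = v.2.val; omega)⟩
  refine fort_elim hW hv.1 hu hadj ?_
  intro w hw hadjw
  have hws : w ∈ slab W lo hi := mem_slab_of_adj hs hv.2.1 hv.2.2 hw hadjw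
  have hwm : v.2.val ≤ w.2.val := hmin w hws
  rcases grid_adj.mp hadjw with ⟨h1, h2 | h2⟩ | ⟨h1, _⟩
  · have h1' : v.1 = w.1 := h1
    have h2' : v.2.val - 1 + 1 = w.2.val := h2
    have hw2 : w.2 = v.2 := Fin.ext (by omega)
    exact Prod.ext h1'.symm hw2
  · have h2' : w.2.val + 1 = v.2.val - 1 := h2
    omega
  · have h1' : w.2.val = v.2.val - 1 := by rw [← show (⟨v.2.val - 1, by omega⟩ : Fin n) = w.2 from h1]
    omega

lemma col_max (hW : Fort (grid n) W) (hs : SlabHyp W lo hi)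
    (hne : (slab W lo hi).Nonempty) :
    ∃ p ∈ slab W lo hi, p.2.val = n - 1 := by
  obtain ⟨v, hv, hmax⟩ := Set.exists_max_image (slab W lo hi) (fun p => p.2.val)
    (Set.toFinite _) hne
  refine ⟨v, hv, ?_⟩
  by_contra h0
  have hcn : v.2.val < n := v.2.isLt
  have hc1 : v.2.val + 1 < n := by omega
  have hu : (v.1, (⟨v.2.val + 1, hc1⟩ : Fin n)) ∉ W := by
    intro huW
    have h : v.2.val + 1 ≤ v.2.val := hmax _ ⟨huW, hv.2⟩
    omega
  have hadj : (grid n).Adj (v.1, (⟨v.2.val + 1, hc1⟩ : Fin n)) v := by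
    rw [grid_adj]
    exact Or.inl ⟨rfl, Or.inr (show v.2.val + 1 = v.2.val + 1 from rfl)⟩
  refine fort_elim hW hv.1 hu hadj ?_
  intro w hw hadjw
  have hws : w ∈ slab W lo hi := mem_slab_of_adj hs hv.2.1 hv.2.2 hw hadjw
  have hwm : w.2.val ≤ v.2.val := hmax w hws
  rcases grid_adj.mp hadjw with ⟨h1, h2 | h2⟩ | ⟨h1, _⟩
  · have h2' : v.2.val + 1 + 1 = w.2.val := h2
    omega
  · have h1' : v.1 = w.1 := h1
    have h2' : w.2.val + 1 = v.2.val + 1 := h2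
    have hw2 : w.2 = v.2 := Fin.ext (by omega)
    exact Prod.ext h1'.symm hw2
  · have h1' : w.2.val = v.2.val + 1 := by rw [← show (⟨v.2.val + 1, hc1⟩ : Fin n) = w.2 from h1]
    omega

lemma col_gap (hW : Fort (grid n) W) (hs : SlabHyp W lo hi) {j : ℕ} (hj : j + 2 < n)
    (h1 : ∀ p ∈ slab W lo hi, p.2.val ≠ j + 1)
    (h2 : ∀ p ∈ slab W lo hi, p.2.val ≠ j + 2) :
    ∀ p ∈ slab W lo hi, p.2.val ≠ j := by
  intro v hv hvj
  have hu : (v.1, (⟨j + 1, by omega⟩ : Fin n)) ∉ W := by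
    intro huW
    exact h1 _ ⟨huW, hv.2⟩ rfl
  have hadj : (grid n).Adj (v.1, (⟨j + 1, by omega⟩ : Fin n)) v := by
    rw [grid_adj]
    exact Or.inl ⟨rfl, Or.inr (show v.2.val + 1 = j + 1 by omega)⟩
  refine fort_elim hW hv.1 hu hadj ?_
  intro w hw hadjw
  have hws : w ∈ slab W lo hi := mem_slab_of_adj hs hv.2.1 hv.2.2 hw hadjw
  rcases grid_adj.mp hadjw with ⟨hh1, hh2 | hh2⟩ | ⟨hh1, _⟩
  · exfalso
    have h2' : j + 1 + 1 = w.2.val := hh2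
    exact h2 w hws (by omega)
  · have hh1' : v.1 = w.1 := hh1
    have hh2' : w.2.val + 1 = j + 1 := hh2
    have hw2 : w.2 = v.2 := Fin.ext (by omega)
    exact Prod.ext hh1'.symm hw2
  · exfalso
    have : w.2.val = j + 1 := by rw [← show (⟨j + 1, by omega⟩ : Fin n) = w.2 from hh1]
    exact h1 w hws this

lemma row_min (hW : Fort (grid n) W) (hne : W.Nonempty) :
    ∃ p ∈ W, p.1.val = 0 := by
  obtain ⟨v, hv, hmin⟩ := Set.exists_min_image W (fun p => p.1.val) (Set.toFinite _) hne
  refine ⟨v, hv, ?_⟩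
  by_contra h0
  have hcn : v.1.val < n := v.1.isLt
  have hc0 : 0 < v.1.val := Nat.pos_of_ne_zero h0
  have hu : ((⟨v.1.val - 1, by omega⟩ : Fin n), v.2) ∉ W := by
    intro huW
    have h : v.1.val ≤ v.1.val - 1 := hmin _ huW
    omega
  have hadj : (grid n).Adj ((⟨v.1.val - 1, by omega⟩ : Fin n), v.2) v := by
    rw [grid_adj]
    exact Or.inr ⟨rfl, Or.inl (show v.1.val - 1 + 1 = v.1.val by omega)⟩
  refine fort_elim hW hv hu hadj ?_
  intro w hw hadjw
  have hwm : v.1.val ≤ w.1.val := hmin w hw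
  rcases grid_adj.mp hadjw with ⟨h1, _⟩ | ⟨h1, h2 | h2⟩
  · exfalso
    have h1' : w.1.val = v.1.val - 1 :=
      by rw [← show (⟨v.1.val - 1, by omega⟩ : Fin n) = w.1 from h1]
    omega
  · have h1' : v.2 = w.2 := h1
    have h2' : v.1.val - 1 + 1 = w.1.val := h2
    have hw1 : w.1 = v.1 := Fin.ext (by omega)
    exact Prod.ext hw1 h1'.symm
  · exfalso
    have h2' : w.1.val + 1 = v.1.val - 1 := h2
    omega

lemma row_max (hW : Fort (grid n) W) (hne : W.Nonempty) :
    ∃ p ∈ W, p.1.val = n - 1 := by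
  obtain ⟨v, hv, hmax⟩ := Set.exists_max_image W (fun p => p.1.val) (Set.toFinite _) hne
  refine ⟨v, hv, ?_⟩
  by_contra h0
  have hcn : v.1.val < n := v.1.isLt
  have hc1 : v.1.val + 1 < n := by omega
  have hu : ((⟨v.1.val + 1, hc1⟩ : Fin n), v.2) ∉ W := by
    intro huW
    have h : v.1.val + 1 ≤ v.1.val := hmax _ huW
    omega
  have hadj : (grid n).Adj ((⟨v.1.val + 1, hc1⟩ : Fin n), v.2) v := by
    rw [grid_adj]
    exact Or.inr ⟨rfl, Or.inr (show v.1.val + 1 = v.1.val + 1 from rfl)⟩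
  refine fort_elim hW hv hu hadj ?_
  intro w hw hadjw
  have hwm : w.1.val ≤ v.1.val := hmax w hw
  rcases grid_adj.mp hadjw with ⟨h1, _⟩ | ⟨h1, h2 | h2⟩
  · exfalso
    have h1' : w.1.val = v.1.val + 1 :=
      by rw [← show (⟨v.1.val + 1, hc1⟩ : Fin n) = w.1 from h1]
    omega
  · exfalso
    have h2' : v.1.val + 1 + 1 = w.1.val := h2
    omega
  · have h1' : v.2 = w.2 := h1
    have h2' : w.1.val + 1 = v.1.val + 1 := h2
    have hw1 : w.1 = v.1 := Fin.ext (by omega)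
    exact Prod.ext hw1 h1'.symm

lemma count_lemma (hn : 2 ≤ n) (A : Finset ℕ) (h0 : 0 ∈ A) (hl : n - 1 ∈ A)
    (hp : ∀ j, j + 1 < n → (j ∈ A ∨ j + 1 ∈ A)) : n / 2 + 1 ≤ A.card := by
  classical
  have : (Finset.range (n / 2 + 1)).card ≤ A.card := by
    apply Finset.card_le_card_of_injOn
      (fun k => if k = 0 then 0 else if 2 * k - 1 ∈ A then 2 * k - 1 else 2 * k)
    · intro k hk
      simp only [Finset.mem_coe, Finset.mem_range] at hk ⊢
      by_cases hk0 : k = 0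
      · simpa [hk0] using h0
      · simp only [hk0, if_false]
        by_cases hA : 2 * k - 1 ∈ A
        · simpa [hA] using hA
        · simp only [hA, if_false]
          have hk1 : 1 ≤ k := Nat.pos_of_ne_zero hk0
          have hkn : 2 * k ≤ n := by
            have : k ≤ n / 2 := by omega
            omega
          rcases Nat.lt_or_ge (2 * k) n with h | h
          · have := hp (2 * k - 1) (by omega)
            rcases this with h' | h'
            · exact absurd h' hA
            · have : 2 * k - 1 + 1 = 2 * k := by omega
              rwa [this] at h'
          · exfalso
            have : 2 * k = n := by omega
            exact hA (by rw [show 2 * k - 1 = n - 1 by omega]; exact hl)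
    · intro a ha b hb hab
      simp only [Finset.coe_range, Set.mem_Iio] at ha hb
      simp only at hab
      split_ifs at hab <;> omega
  simpa using this

lemma slab_card (hn : 2 ≤ n) (hW : Fort (grid n) W) {lo hi : ℕ} (hs : SlabHyp W lo hi)
    (hne : (slab W lo hi).Nonempty) : n / 2 + 1 ≤ (slab W lo hi).ncard := by
  classical
  set A : Finset ℕ := ((Set.toFinite (slab W lo hi)).toFinset.image fun p => p.2.val)
    with hA_def
  have hmemA : ∀ j, j ∈ A ↔ ∃ p ∈ slab W lo hi, p.2.val = j := by
    intro j
    simp only [hA_def, Finset.mem_image, Set.Finite.mem_toFinset]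
  have h0 : 0 ∈ A := by
    rw [hmemA]
    exact col_min hW hs hne
  have hl : n - 1 ∈ A := by
    rw [hmemA]
    exact col_max hW hs hne
  have hp : ∀ j, j + 1 < n → (j ∈ A ∨ j + 1 ∈ A) := by
    intro j
    induction j with
    | zero => intro _; exact Or.inl h0
    | succ j ih =>
      intro hj
      by_cases hA1 : j + 1 ∈ A
      · exact Or.inl hA1
      · have hjA : j ∈ A := (ih (by omega)).resolve_right hA1
        right
        by_contra hA2
        obtain ⟨p, hp', hpj⟩ := (hmemA j).mp hjA
        refine col_gap hW hs (j := j) (by omega) ?_ ?_ p hp' hpj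
        · intro q hq hqj
          exact hA1 ((hmemA (j + 1)).mpr ⟨q, hq, hqj⟩)
        · intro q hq hqj
          exact hA2 ((hmemA (j + 2)).mpr ⟨q, hq, hqj⟩)
  have hcard := count_lemma hn A h0 hl hp
  have hle : A.card ≤ (slab W lo hi).ncard := by
    rw [Set.ncard_eq_toFinset_card _ (Set.toFinite _)]
    exact Finset.card_image_le
  omega

lemma fort_ncard (hn : 2 ≤ n) (hW : Fort (grid n) W) (hne : W.Nonempty) :
    n ≤ W.ncard := by
  classical
  by_cases hall : ∀ i : Fin n, ∃ p ∈ W, p.1 = i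
  · choose g hg1 hg2 using hall
    have : (Finset.univ : Finset (Fin n)).card ≤ (Set.toFinite W).toFinset.card := by
      apply Finset.card_le_card_of_injOn g
      · intro i _
        rw [Finset.mem_coe, Set.Finite.mem_toFinset]
        exact hg1 i
      · intro a _ b _ hab
        rw [← hg2 a, ← hg2 b, hab]
    rw [Set.ncard_eq_toFinset_card _ (Set.toFinite W)]
    simpa using this
  · push_neg at hall
    obtain ⟨a, ha⟩ := hall
    have ha' : ∀ p ∈ W, p.1 ≠ a := fun p hp h => ha p hp h
    obtain ⟨p0, hp0, h0⟩ := row_min hW hne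
    obtain ⟨p1, hp1, h1⟩ := row_max hW hne
    have han : a.val < n := a.isLt
    have ha0 : a.val ≠ 0 := by
      intro h
      exact ha' p0 hp0 (Fin.ext (by omega))
    have ha1 : a.val ≠ n - 1 := by
      intro h
      exact ha' p1 hp1 (Fin.ext (by omega))
    have hvalne : ∀ p ∈ W, p.1.val ≠ a.val := by
      intro p hp h
      exact ha' p hp (Fin.ext h)
    have hsup : SlabHyp W 0 (a.val - 1) := by
      intro p hp _ h2
      have := hvalne p hp
      omega
    have hsdn : SlabHyp W (a.val + 1) (n - 1) := by
      intro p hp h1' _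
      have := hvalne p hp
      have := p.1.isLt
      omega
    have hneup : (slab W 0 (a.val - 1)).Nonempty :=
      ⟨p0, hp0, by omega, by omega⟩
    have hnedn : (slab W (a.val + 1) (n - 1)).Nonempty :=
      ⟨p1, hp1, by omega, by omega⟩
    have hcup := slab_card hn hW hsup hneup
    have hcdn := slab_card hn hW hsdn hnedn
    have hdisj : Disjoint (slab W 0 (a.val - 1)) (slab W (a.val + 1) (n - 1)) := by
      rw [Set.disjoint_left]
      rintro p ⟨_, _, hp2⟩ ⟨_, hp3, _⟩
      omega
    have hsub : slab W 0 (a.val - 1) ∪ slab W (a.val + 1) (n - 1) ⊆ W := by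
      rintro p (⟨hp, _⟩ | ⟨hp, _⟩) <;> exact hp
    have hun : (slab W 0 (a.val - 1) ∪ slab W (a.val + 1) (n - 1)).ncard =
        (slab W 0 (a.val - 1)).ncard + (slab W (a.val + 1) (n - 1)).ncard :=
      Set.ncard_union_eq hdisj (Set.toFinite _) (Set.toFinite _)
    have hle := Set.ncard_le_ncard hsub (Set.toFinite W)
    omega

end Slab

end GridFort

namespace GridFort

open ZeroForcing

variable {n : ℕ}

lemma subset_step {V : Type*} {G : SimpleGraph V} (S : Set V) : S ⊆ step G S :=
  Set.subset_union_left

lemma subset_iterate {V : Type*} {G : SimpleGraph V} (S : Set V) (k : ℕ) :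
    S ⊆ (step G)^[k] S := by
  induction k with
  | zero => simp
  | succ k ih =>
    rw [Function.iterate_succ_apply']
    exact ih.trans (subset_step _)

lemma failed_stalled {V : Type*} [Fintype V] {G : SimpleGraph V} (S : Set V)
    (hS : IsFailedSet G S) :
    ∃ T : Set V, S ⊆ T ∧ step G T = T ∧ T ≠ Set.univ := by
  have hfix : ∃ m, (step G)^[m + 1] S = (step G)^[m] S := by
    by_contra hne
    push_neg at hne
    have hmono : ∀ m : ℕ, m ≤ ((step G)^[m] S).ncard := by
      intro m
      induction m with
      | zero => exact Nat.zero_le _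
      | succ m ih =>
        have hsub : (step G)^[m] S ⊂ (step G)^[m + 1] S := by
          rw [Function.iterate_succ_apply']
          exact ⟨subset_step _, by
            intro h
            exact hne m (by rw [Function.iterate_succ_apply']
                            exact le_antisymm h (subset_step _))⟩
        have := Set.ncard_lt_ncard hsub (Set.toFinite _)
        omega
    have h1 := hmono (Fintype.card V + 1)
    have h2 : (((step G)^[Fintype.card V + 1]) S).ncard ≤ Fintype.card V := by
      have := Set.ncard_le_ncard (Set.subset_univ (((step G)^[Fintype.card V + 1]) S))
        (Set.toFinite _)
      simpa [Set.ncard_univ] using this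
    omega
  obtain ⟨m, hm⟩ := hfix
  refine ⟨(step G)^[m] S, subset_iterate S m, ?_, ?_⟩
  · rw [← Function.iterate_succ_apply' (step G) m S]; exact hm
  · intro h
    exact hS ⟨m, h⟩

lemma stalled_compl_fort {W : Set (Fin n × Fin n)} (T : Set (Fin n × Fin n))
    (hW : W = Tᶜ) (hT : step (grid n) T = T) : Fort (grid n) W := by
  subst hW
  intro v hv u hu hadj
  have hvT : v ∉ T := hv
  have huT : u ∈ T := not_not.mp hu
  have hvstep : v ∉ step (grid n) T := by rw [hT]; exact hvT
  have : ¬(∃ u' ∈ T, (grid n).Adj u' v ∧ ∀ w, (grid n).Adj u' w → w ∉ T → w = v) := by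
    intro h
    exact hvstep (Or.inr h)
  push_neg at this
  obtain ⟨w, hadjw, hwT, hwv⟩ := this u huT hadj
  exact ⟨w, hwT, hadjw, hwv⟩

/-- the diagonal -/
def diag (n : ℕ) : Set (Fin n × Fin n) := {p | p.1 = p.2}

lemma step_diag_compl : step (grid n) (diag n)ᶜ = (diag n)ᶜ := by
  apply Set.union_eq_self_of_subset_right
  rintro v ⟨u, hu, huv, hforce⟩
  by_contra hv
  have hv' : v.1 = v.2 := not_not.mp hv
  have hvv : v.1.val = v.2.val := by rw [hv']
  have hu' : u.1.val ≠ u.2.val := fun h => hu (Fin.ext h)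
  rcases grid_adj.mp huv with ⟨h1, h2 | h2⟩ | ⟨h1, h2 | h2⟩
  all_goals first
      | (have h1' : u.1.val = v.1.val := by rw [h1])
      | (have h1' : u.2.val = v.2.val := by rw [h1])
  · -- u.1 = v.1, u.2.val + 1 = v.2.val ; take w = (u.2, u.2)
    have hadjw : (grid n).Adj u (u.2, u.2) := by
      rw [grid_adj]
      exact Or.inr ⟨rfl, Or.inr (by simp only; omega)⟩
    have hwD : (u.2, u.2) ∉ (diag n)ᶜ := fun h => h rfl
    have := hforce _ hadjw hwD
    have h5 : u.2 = v.2 := by rw [← this]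
    have : u.2.val = v.2.val := by rw [h5]
    omega
  · have hadjw : (grid n).Adj u (u.2, u.2) := by
      rw [grid_adj]
      exact Or.inr ⟨rfl, Or.inl (by simp only; omega)⟩
    have hwD : (u.2, u.2) ∉ (diag n)ᶜ := fun h => h rfl
    have := hforce _ hadjw hwD
    have h5 : u.2 = v.2 := by rw [← this]
    have : u.2.val = v.2.val := by rw [h5]
    omega
  · -- u.2 = v.2, u.1.val + 1 = v.1.val ; take w = (u.1, u.1)
    have hadjw : (grid n).Adj u (u.1, u.1) := by
      rw [grid_adj]
      exact Or.inl ⟨rfl, Or.inr (by simp only; omega)⟩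
    have hwD : (u.1, u.1) ∉ (diag n)ᶜ := fun h => h rfl
    have := hforce _ hadjw hwD
    have h5 : u.1 = v.1 := by rw [← this]
    have : u.1.val = v.1.val := by rw [h5]
    omega
  · have hadjw : (grid n).Adj u (u.1, u.1) := by
      rw [grid_adj]
      exact Or.inl ⟨rfl, Or.inl (by simp only; omega)⟩
    have hwD : (u.1, u.1) ∉ (diag n)ᶜ := fun h => h rfl
    have := hforce _ hadjw hwD
    have h5 : u.1 = v.1 := by rw [← this]
    have : u.1.val = v.1.val := by rw [h5]
    omega

lemma diag_compl_failed (hn : 2 ≤ n) : IsFailedSet (grid n) (diag n)ᶜ := by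
  rintro ⟨k, hk⟩
  rw [Function.iterate_fixed step_diag_compl] at hk
  have h00 : ((⟨0, by omega⟩ : Fin n), (⟨0, by omega⟩ : Fin n)) ∈ (diag n)ᶜ := by
    rw [hk]; trivial
  exact h00 rfl

lemma diag_ncard : (diag n).ncard = n := by
  have himg : diag n = (fun i : Fin n => (i, i)) '' Set.univ := by
    ext p
    constructor
    · intro hp
      exact ⟨p.1, trivial, by rw [Prod.ext_iff]; exact ⟨rfl, hp⟩⟩
    · rintro ⟨i, _, rfl⟩
      rfl
  rw [himg, Set.ncard_image_of_injective _ (fun a b h => (Prod.ext_iff.mp h).1),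
    Set.ncard_univ, Nat.card_eq_fintype_card, Fintype.card_fin]

lemma diag_compl_ncard (hn : 2 ≤ n) : ((diag n)ᶜ).ncard = n ^ 2 - n := by
  have h := Set.ncard_add_ncard_compl (diag n)
  rw [diag_ncard] at h
  have hcard : Nat.card (Fin n × Fin n) = n * n := by
    simp [Nat.card_eq_fintype_card]
  rw [hcard] at h
  have : n ^ 2 = n * n := sq n
  omega

lemma failed_le (hn : 2 ≤ n) (S : Set (Fin n × Fin n))
    (hS : IsFailedSet (grid n) S) : S.ncard ≤ n ^ 2 - n := by
  obtain ⟨T, hST, hfix, hTuniv⟩ := failed_stalled S hS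
  have hW : Fort (grid n) Tᶜ := stalled_compl_fort T rfl hfix
  have hWne : Tᶜ.Nonempty := Set.nonempty_compl.mpr hTuniv
  have hWcard := fort_ncard hn hW hWne
  have h := Set.ncard_add_ncard_compl T
  have hcard : Nat.card (Fin n × Fin n) = n * n := by
    simp [Nat.card_eq_fintype_card]
  rw [hcard] at h
  have hle := Set.ncard_le_ncard hST (Set.toFinite T)
  have : n ^ 2 = n * n := sq n
  omega

end GridFort

theorem failed_zf_grid (n : ℕ) (hn : 2 ≤ n) :
    ZeroForcing.F ((SimpleGraph.pathGraph n).boxProd (SimpleGraph.pathGraph n)) = n ^ 2 - n := by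
  have hmem : n ^ 2 - n ∈ {k | ∃ S : Set (Fin n × Fin n), S.ncard = k ∧
      ZeroForcing.IsFailedSet (GridFort.grid n) S} :=
    ⟨(GridFort.diag n)ᶜ, GridFort.diag_compl_ncard hn, GridFort.diag_compl_failed hn⟩
  have hub : ∀ k ∈ {k | ∃ S : Set (Fin n × Fin n), S.ncard = k ∧
      ZeroForcing.IsFailedSet (GridFort.grid n) S}, k ≤ n ^ 2 - n := by
    rintro k ⟨S, rfl, hS⟩
    exact GridFort.failed_le hn S hS
  exact le_antisymm (csSup_le ⟨_, hmem⟩ hub) (le_csSup ⟨n ^ 2 - n, hub⟩ hmem)
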